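/- Let (𝓛,W) be a representation of E_{τ,η}(so₃) and let B₁, B₂ be the associated operators on Fun(W). Then for all u₁, u₂ (and generic q), as operators on Fun(W): B₂(u₂)B₁(u₁) = (1/g₂₁)·( β₂₁(η,−q)·B₁(u₁)B₂(u₂) + α₂₁(−q,η)·B₂(u₁)B₁(u₂) ), where β₂₁(η,−q) and α₂₁(−q,η) denote multiplication by the corresponding functions of q and g₂₁ is a scalar. -/

import Mathlib

open scoped BigOperators Kronecker TensorProduct
open Complex

noncomputable section

namespace EtauEta

/-- Jacobi's theta function `ϑ(u) = -∑_{j∈ℤ} exp(πi(j+1/2)²τ + 2πi(j+1/2)(u+1/2))`. -/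
def th (τ u : ℂ) : ℂ :=
  -∑' j : ℤ, Complex.exp ((Real.pi : ℂ) * Complex.I * ((j : ℂ) + 1/2)^2 * τ +
      2 * (Real.pi : ℂ) * Complex.I * ((j : ℂ) + 1/2) * (u + 1/2))

variable (τ η : ℂ)

/-- `g(u)`. -/
def gf (u : ℂ) : ℂ := th τ (u - η) * th τ (u - 2*η) / (th τ η * th τ (2*η))

/-- `α(q₁,q₂,u)`. -/
def af (q₁ q₂ u : ℂ) : ℂ := th τ (η - u) * th τ (q₁ + q₂ - u) / (th τ η * th τ (q₁ + q₂))

/-- `β(q₁,q₂,u)`. -/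
def bf (q₁ q₂ u : ℂ) : ℂ :=
  th τ (η - u) * th τ u * th τ (q₁ + q₂ - 2*η) / (th τ (-(2*η)) * th τ η * th τ (q₁ + q₂))

/-- `ε(q,u)`. -/
def ef (q u : ℂ) : ℂ :=
  th τ (η + u) * th τ (2*η - u) / (th τ η * th τ (2*η)) -
    th τ u * th τ (η - u) / (th τ η * th τ (2*η)) *
      (th τ (q + η) * th τ (q - 2*η) / (th τ (q - η) * th τ q) +
       th τ (q - η) * th τ (q + 2*η) / (th τ (q + η) * th τ q))

/-- `γ(q₁,q₂,u)`. -/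
def cf (q₁ q₂ u : ℂ) : ℂ :=
  th τ u * th τ (q₁ + q₂ - η - u) * th τ (q₁ - 2*η) * th τ (q₂ + η) /
    (th τ η * th τ (q₁ + q₂ - 2*η) * th τ (q₁ + η) * th τ q₂)

/-- `δ(q,u)`. -/
def df (q u : ℂ) : ℂ := th τ (u - q) * th τ (u - q + η) / (th τ q * th τ (q - η))

/-- `ω(u) = ϑ(u+η)ϑ(u−2η)/(ϑ(u−η)ϑ(u+2η))`. -/
def om (u : ℂ) : ℂ := th τ (u + η) * th τ (u - 2*η) / (th τ (u - η) * th τ (u + 2*η))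

/-- `y(x,u) = γ(x,−x,u)/γ(x,η,u)`. -/
def yf (x u : ℂ) : ℂ := cf τ η x (-x) u / cf τ η x η u

/-- `z(x,u) = g(u)/β(x,η,u)`. -/
def zf (x u : ℂ) : ℂ := gf τ η u / bf τ η x η u

/-- Genericity of `η`: `ϑ` does not vanish at nonzero integer multiples of `η`. -/
def genEta : Prop := ∀ m : ℤ, m ≠ 0 → th τ ((m : ℂ) * η) ≠ 0

/-- Genericity of a parameter `x`: `ϑ` does not vanish on `±x + ℤη`
(this makes all the denominators involving `x` nonzero). -/
def genAt (x : ℂ) : Prop :=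
  ∀ m : ℤ, th τ (x + (m : ℂ) * η) ≠ 0 ∧ th τ (-x + (m : ℂ) * η) ≠ 0

/-- The weights `(λ₁,λ₂,λ₃) = (1,0,−1)` of the basis vectors `e₁,e₂,e₃` of `V`. -/
def wt : Fin 3 → ℂ := ![1, 0, -1]

/-- Matrix units `E_{ij}` (0-indexed). -/
def E (i j : Fin 3) : Matrix (Fin 3) (Fin 3) ℂ := Matrix.single i j 1

/-- The `R`-matrix `R(q,u)` of `E_{τ,η}(so₃)`, as an endomorphism of `V ⊗ V`
(identified with matrices indexed by `Fin 3 × Fin 3`). -/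
def Rm (q u : ℂ) : Matrix (Fin 3 × Fin 3) (Fin 3 × Fin 3) ℂ :=
  gf τ η u • (E 0 0 ⊗ₖ E 0 0) + gf τ η u • (E 2 2 ⊗ₖ E 2 2) + ef τ η q u • (E 1 1 ⊗ₖ E 1 1)
  + af τ η η q u • (E 0 1 ⊗ₖ E 1 0) + af τ η q η u • (E 1 0 ⊗ₖ E 0 1)
  + af τ η (-q) η u • (E 1 2 ⊗ₖ E 2 1) + af τ η η (-q) u • (E 2 1 ⊗ₖ E 1 2)
  + bf τ η η q u • (E 0 0 ⊗ₖ E 1 1) + bf τ η q η u • (E 1 1 ⊗ₖ E 0 0)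
  + bf τ η (-q) η u • (E 1 1 ⊗ₖ E 2 2) + bf τ η η (-q) u • (E 2 2 ⊗ₖ E 1 1)
  + cf τ η (-q) q u • (E 0 0 ⊗ₖ E 2 2) + cf τ η (-q) η u • (E 0 1 ⊗ₖ E 2 1)
  - cf τ η η q u • (E 1 0 ⊗ₖ E 1 2)
  + cf τ η q (-q) u • (E 2 2 ⊗ₖ E 0 0) + cf τ η q η u • (E 2 1 ⊗ₖ E 0 1)
  - cf τ η η (-q) u • (E 1 2 ⊗ₖ E 1 0)
  + df τ η q u • (E 2 0 ⊗ₖ E 0 2) + df τ η (-q) u • (E 0 2 ⊗ₖ E 2 0)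

variable {W : Type*} [AddCommGroup W] [Module ℂ W]

/-- Zero-weight condition for the blocks `L q u i j ∈ End(W)` of a Lax operator
`𝓛(q,u) ∈ End(V ⊗ W)` (for generic `q`): `L q u i j` maps `W[μ]` to `W[μ + λ_j − λ_i]`. -/
def ZeroWt (wsp : ℂ → Submodule ℂ W)
    (L : ℂ → ℂ → Fin 3 → Fin 3 → Module.End ℂ W) : Prop :=
  ∀ q, genAt τ η q → ∀ (u : ℂ) (i j : Fin 3) (μ : ℂ), ∀ w ∈ wsp μ,
    L q u i j w ∈ wsp (μ + wt j - wt i)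

/-- The dynamical RLL relation
`R₁₂(q−2ηh₃,u₁−u₂)𝓛₁₃(q,u₁)𝓛₂₃(q−2ηh₁,u₂) = 𝓛₂₃(q,u₂)𝓛₁₃(q−2ηh₂,u₁)R₁₂(q,u₁−u₂)`
in `End(V ⊗ V ⊗ W)`, written in block form on a pure tensor `e_a ⊗ e_b ⊗ w` with
`w ∈ W[μ]` a weight vector, comparing the components along `e_k ⊗ e_l` (for generic `q`). -/
def RLLrel (wsp : ℂ → Submodule ℂ W)
    (L : ℂ → ℂ → Fin 3 → Fin 3 → Module.End ℂ W) : Prop :=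
  ∀ q, genAt τ η q → ∀ (u₁ u₂ : ℂ) (a b k l : Fin 3) (μ : ℂ), ∀ w ∈ wsp μ,
    (∑ i : Fin 3, ∑ j : Fin 3,
      Rm τ η (q - 2*η*(μ + wt a + wt b - wt i - wt j)) (u₁ - u₂) (k, l) (i, j) •
        L q u₁ i a (L (q - 2*η * wt a) u₂ j b w))
    = ∑ i : Fin 3, ∑ j : Fin 3,
        Rm τ η q (u₁ - u₂) (i, j) (a, b) •
          L q u₂ l j (L (q - 2*η * wt j) u₁ k i w)

open scoped Classical in
/-- A representation of the elliptic quantum group `E_{τ,η}(so₃)`: a module `W` with a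
weight decomposition `W = ⊕_λ W[λ]`, together with the blocks `L q u i j` of a
zero-weight Lax operator `𝓛(q,u) ∈ End(V ⊗ W)` satisfying the dynamical RLL relation. -/
def IsRep (wsp : ℂ → Submodule ℂ W)
    (L : ℂ → ℂ → Fin 3 → Fin 3 → Module.End ℂ W) : Prop :=
  DirectSum.IsInternal wsp ∧ ZeroWt τ η wsp L ∧ RLLrel τ η wsp L

/-- The operators `L_{ij}(u)` of the operator algebra acting on `Fun(W)`:
`(L_{ij}(u)f)(q) = 𝓛_{ij}(q,u) f(q − 2ηλ_j)`.  In particular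
`A₁(u) = Lop η L 0 0 u`, `B₁(u) = Lop η L 0 1 u`, `B₂(u) = Lop η L 0 2 u`. -/
def Lop (L : ℂ → ℂ → Fin 3 → Fin 3 → Module.End ℂ W) (i j : Fin 3) (u : ℂ) :
    (ℂ → W) → ℂ → W :=
  fun f q => L q u i j (f (q - 2*η * wt j))

/-- The transfer matrix acting on `Fun(W)`: `(t(u)f)(q) = ∑ᵢ 𝓛_{ii}(q,u) f(q − 2ηλ_i)`. -/
def tmat (L : ℂ → ℂ → Fin 3 → Fin 3 → Module.End ℂ W) (u : ℂ) (f : ℂ → W) : ℂ → W :=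
  fun q => ∑ i : Fin 3, L q u i i (f (q - 2*η * wt i))


set_option maxHeartbeats 1600000 in
private lemma keyrel (τ η : ℂ) {W : Type*} [AddCommGroup W] [Module ℂ W]
    (wsp : ℂ → Submodule ℂ W) (L : ℂ → ℂ → Fin 3 → Fin 3 → Module.End ℂ W)
    (hrep : IsRep τ η wsp L) (u₁ u₂ q : ℂ) (hq : genAt τ η q) (w : W) :
    gf τ η (u₂ - u₁) • L q u₂ 0 2 (L (q + 2*η) u₁ 0 1 w) =
      af τ η (-q) η (u₂ - u₁) • L q u₁ 0 2 (L (q + 2*η) u₂ 0 1 w) +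
      bf τ η η (-q) (u₂ - u₁) • L q u₁ 0 1 (L q u₂ 0 2 w) := by
  have hw : w ∈ ⨆ μ, wsp μ := by
    rw [hrep.1.submodule_iSup_eq_top]; trivial
  refine Submodule.iSup_induction (motive := fun w =>
      gf τ η (u₂ - u₁) • L q u₂ 0 2 (L (q + 2*η) u₁ 0 1 w) =
      af τ η (-q) η (u₂ - u₁) • L q u₁ 0 2 (L (q + 2*η) u₂ 0 1 w) +
      bf τ η η (-q) (u₂ - u₁) • L q u₁ 0 1 (L q u₂ 0 2 w)) wsp hw ?_ ?_ ?_
  · intro μ x hx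
    have h := hrep.2.2 q hq u₂ u₁ 2 1 0 0 μ x hx
    simp only [Fin.sum_univ_three] at h
    simp only [Rm, E, wt, Matrix.kroneckerMap_apply, Matrix.add_apply, Matrix.sub_apply,
      Matrix.smul_apply, Matrix.single, Matrix.of_apply, Matrix.cons_val_zero,
      Matrix.cons_val_one, Matrix.head_cons, Matrix.cons_val_two, Matrix.tail_cons,
      mul_one, mul_zero, zero_mul, one_mul, zero_smul, smul_zero, zero_add, add_zero,
      sub_zero, zero_sub, Prod.fst, Prod.snd] at h
    norm_num [Fin.ext_iff] at h
    exact h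
  · simp
  · intro x y hx hy
    simp only [map_add, smul_add] at *
    rw [hx, hy]
    abel

/-- the commutation relation
`B₂(u₂)B₁(u₁) = (1/g₂₁)(β₂₁(η,−q)B₁(u₁)B₂(u₂) + α₂₁(−q,η)B₂(u₁)B₁(u₂))`
as operators on `Fun(W)` (for generic `q`). -/
theorem crB2B1 (τ η : ℂ) (hτ : 0 < τ.im) (hη : genEta τ η)
    {W : Type*} [AddCommGroup W] [Module ℂ W]
    (wsp : ℂ → Submodule ℂ W) (L : ℂ → ℂ → Fin 3 → Fin 3 → Module.End ℂ W)
    (hrep : IsRep τ η wsp L)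
    (u₁ u₂ : ℂ) (hu : genAt τ η (u₁ - u₂)) (q : ℂ) (hq : genAt τ η q) (f : ℂ → W) :
    Lop η L 0 2 u₂ (Lop η L 0 1 u₁ f) q =
      (gf τ η (u₂ - u₁))⁻¹ •
        (bf τ η η (-q) (u₂ - u₁) • Lop η L 0 1 u₁ (Lop η L 0 2 u₂ f) q +
          af τ η (-q) η (u₂ - u₁) • Lop η L 0 2 u₁ (Lop η L 0 1 u₂ f) q) := by
  have h1 : th τ (u₂ - u₁ - η) ≠ 0 := by
    have h := (hu (-1)).2
    rw [show -(u₁ - u₂) + ((-1 : ℤ) : ℂ) * η = u₂ - u₁ - η by push_cast; ring] at h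
    exact h
  have h2 : th τ (u₂ - u₁ - 2*η) ≠ 0 := by
    have h := (hu (-2)).2
    rw [show -(u₁ - u₂) + ((-2 : ℤ) : ℂ) * η = u₂ - u₁ - 2*η by push_cast; ring] at h
    exact h
  have hd1 : th τ η ≠ 0 := by
    have h := hη 1 one_ne_zero
    rwa [show ((1 : ℤ) : ℂ) * η = η by push_cast; ring] at h
  have hd2 : th τ (2*η) ≠ 0 := by
    have h := hη 2 two_ne_zero
    rwa [show ((2 : ℤ) : ℂ) * η = 2*η by push_cast; ring] at h
  have hg : gf τ η (u₂ - u₁) ≠ 0 :=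
    div_ne_zero (mul_ne_zero h1 h2) (mul_ne_zero hd1 hd2)
  simp only [Lop, wt, Matrix.cons_val_zero, Matrix.cons_val_one, Matrix.head_cons,
    Matrix.cons_val_two, Matrix.tail_cons]
  simp only [mul_zero, sub_zero, mul_neg_one, sub_neg_eq_add]
  rw [eq_inv_smul_iff₀ hg, keyrel τ η wsp L hrep u₁ u₂ q hq (f (q + 2*η))]
  abel


end EtauEta
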